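/- For x ∈ D and v ∈ ℝ², with g(x) = (2x₂/(1+x₁), 2√(1-|x|²)/(1+x₁)), the differential of g at x satisfies |Dg_x(v)|² = 4((1-|x|²)|v|² + ⟨x,v⟩²)/((1+x₁)²(1-|x|²)). -/

import Mathlib

set_option maxHeartbeats 1000000

noncomputable section

/-- The Euclidean plane. -/
abbrev E2 := EuclideanSpace ℝ (Fin 2)

/-- The open unit disk. -/
def Dset : Set E2 := {x | ‖x‖ < 1}

/-- The upper half plane. -/
def Hset : Set E2 := {x | x 1 > 0}

/-- g(x) = (2x₂/(1+x₁), 2√(1-|x|²)/(1+x₁)). -/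
def gFH (x : E2) : E2 := WithLp.toLp 2 ![2 * x 1 / (1 + x 0), 2 * Real.sqrt (1 - ‖x‖ ^ 2) / (1 + x 0)]

/-- Key algebraic identity. -/
lemma key_gFH_identity (x0 x1 v0 v1 r : ℝ) (hr : r ≠ 0) (ha : 1 + x0 ≠ 0)
    (h2 : r ^ 2 = 1 - (x0 ^ 2 + x1 ^ 2)) :
    (2 / (1 + x0) * v1 - 2 * x1 / (1 + x0) ^ 2 * v0) ^ 2
      + (-(2 / ((1 + x0) * r)) * (x0 * v0 + x1 * v1) - 2 * r / (1 + x0) ^ 2 * v0) ^ 2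
    = 4 * (r ^ 2 * (v0 ^ 2 + v1 ^ 2) + (x0 * v0 + x1 * v1) ^ 2) / ((1 + x0) ^ 2 * r ^ 2) := by
  have hs : 1 - (x0 ^ 2 + x1 ^ 2) ≠ 0 := h2 ▸ pow_ne_zero 2 hr
  have expand : (-(2 / ((1 + x0) * r)) * (x0 * v0 + x1 * v1) - 2 * r / (1 + x0) ^ 2 * v0) ^ 2
      = 4 * (x0 * v0 + x1 * v1) ^ 2 / ((1 + x0) ^ 2 * r ^ 2)
        + 8 * (x0 * v0 + x1 * v1) * v0 / (1 + x0) ^ 3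
        + 4 * (r ^ 2) * v0 ^ 2 / (1 + x0) ^ 4 := by
    field_simp
    ring
  rw [expand, h2]
  field_simp
  ring

theorem norm_fderiv_gFH_sq (x : E2) (hx : x ∈ Dset) (v : E2) :
    ‖fderiv ℝ gFH x v‖ ^ 2
      = 4 * ((1 - ‖x‖ ^ 2) * ‖v‖ ^ 2 + (inner ℝ x v : ℝ) ^ 2)
          / ((1 + x 0) ^ 2 * (1 - ‖x‖ ^ 2)) := by
  have hx' : ‖x‖ < 1 := hx
  have hxn : ‖x‖ ^ 2 = x 0 ^ 2 + x 1 ^ 2 := by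
    rw [EuclideanSpace.norm_eq, Real.sq_sqrt (by positivity)]
    simp [Fin.sum_univ_two, sq_abs]
  have hvn : ‖v‖ ^ 2 = v 0 ^ 2 + v 1 ^ 2 := by
    rw [EuclideanSpace.norm_eq, Real.sq_sqrt (by positivity)]
    simp [Fin.sum_univ_two, sq_abs]
  have hinner : (inner ℝ x v : ℝ) = x 0 * v 0 + x 1 * v 1 := by
    simp [PiLp.inner_apply, Fin.sum_univ_two, RCLike.inner_apply, conj_trivial]
    ring
  have hs : (0:ℝ) < 1 - ‖x‖ ^ 2 := by nlinarith [norm_nonneg x]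
  have ha : (0:ℝ) < 1 + x 0 := by nlinarith
  set r := Real.sqrt (1 - ‖x‖ ^ 2) with hrdef
  have hr : 0 < r := Real.sqrt_pos.2 hs
  have hr2 : r ^ 2 = 1 - ‖x‖ ^ 2 := Real.sq_sqrt hs.le
  -- projections
  have hp0 : HasFDerivAt (fun y : E2 => y 0) (EuclideanSpace.proj (0 : Fin 2) : E2 →L[ℝ] ℝ) x := by
    simpa using (EuclideanSpace.proj (0 : Fin 2) : E2 →L[ℝ] ℝ).hasFDerivAt (x := x)
  have hp1 : HasFDerivAt (fun y : E2 => y 1) (EuclideanSpace.proj (1 : Fin 2) : E2 →L[ℝ] ℝ) x := by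
    simpa using (EuclideanSpace.proj (1 : Fin 2) : E2 →L[ℝ] ℝ).hasFDerivAt (x := x)
  have hd : HasFDerivAt (fun y : E2 => 1 + y 0) (EuclideanSpace.proj (0 : Fin 2) : E2 →L[ℝ] ℝ) x :=
    hp0.const_add 1
  have hinv : HasFDerivAt (fun y : E2 => (1 + y 0)⁻¹)
      ((-((1 + x 0) ^ 2)⁻¹) • (EuclideanSpace.proj (0 : Fin 2) : E2 →L[ℝ] ℝ)) x :=
    (hasDerivAt_inv ha.ne').comp_hasFDerivAt x hd
  -- derivatives of the two components
  set D0 : E2 →L[ℝ] ℝ :=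
    (2 / (1 + x 0)) • (EuclideanSpace.proj (1 : Fin 2) : E2 →L[ℝ] ℝ)
      - (2 * x 1 / (1 + x 0) ^ 2) • (EuclideanSpace.proj (0 : Fin 2) : E2 →L[ℝ] ℝ) with hD0
  set D1 : E2 →L[ℝ] ℝ :=
    (-(2 / ((1 + x 0) * r))) • (innerSL ℝ x)
      - (2 * r / (1 + x 0) ^ 2) • (EuclideanSpace.proj (0 : Fin 2) : E2 →L[ℝ] ℝ) with hD1
  have h0 : HasFDerivAt (fun y : E2 => 2 * y 1 / (1 + y 0)) D0 x := by
    have := ((hp1.const_mul 2).mul hinv)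
    simp only [div_eq_mul_inv]
    refine this.congr_fderiv ?_
    ext w
    simp [hD0]
    field_simp
    ring
  have h1 : HasFDerivAt (fun y : E2 => 2 * Real.sqrt (1 - ‖y‖ ^ 2) / (1 + y 0)) D1 x := by
    have hq : HasFDerivAt (fun y : E2 => ‖y‖ ^ 2) (2 • (innerSL ℝ x)) x :=
      (hasStrictFDerivAt_norm_sq x).hasFDerivAt
    have hsq : HasFDerivAt (fun y : E2 => Real.sqrt (1 - ‖y‖ ^ 2))
        ((-(1 / r)) • (innerSL ℝ x)) x := by
      have h' := (hq.const_sub 1).sqrt (f := fun y : E2 => 1 - ‖y‖ ^ 2) hs.ne'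
      have heq : ((-(1 / r)) • (innerSL ℝ x) : E2 →L[ℝ] ℝ)
          = (1 / (2 * √(1 - ‖x‖ ^ 2))) • -(2 • innerSL ℝ x) := by
        ext w
        simp [hrdef]
        field_simp
      rw [heq]
      exact h'
    have := ((hsq.const_mul 2).mul hinv)
    simp only [div_eq_mul_inv]
    refine this.congr_fderiv ?_
    ext w
    simp [hD1, hrdef]
    field_simp
    ring
  -- assemble
  set e := (PiLp.continuousLinearEquiv 2 ℝ (fun _ : Fin 2 => ℝ)).symm with he
  set D : Fin 2 → (E2 →L[ℝ] ℝ) := ![D0, D1] with hD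
  have hG : HasFDerivAt
      (fun y : E2 => (![2 * y 1 / (1 + y 0), 2 * Real.sqrt (1 - ‖y‖ ^ 2) / (1 + y 0)] : Fin 2 → ℝ))
      (ContinuousLinearMap.pi D) x := by
    apply hasFDerivAt_pi'.2
    intro i
    fin_cases i <;>
      simp only [ContinuousLinearMap.proj_pi, hD, Matrix.cons_val_zero, Matrix.cons_val_one,
        Matrix.head_cons, Fin.isValue]
    · exact h0
    · exact h1
  have hg : HasFDerivAt gFH (e.toContinuousLinearMap.comp (ContinuousLinearMap.pi D)) x :=
    e.comp_hasFDerivAt_iff.2 hG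
  rw [hg.fderiv]
  have hw0 : (e.toContinuousLinearMap.comp (ContinuousLinearMap.pi D)) v 0 = D0 v := rfl
  have hw1 : (e.toContinuousLinearMap.comp (ContinuousLinearMap.pi D)) v 1 = D1 v := rfl
  have hnw : ‖(e.toContinuousLinearMap.comp (ContinuousLinearMap.pi D)) v‖ ^ 2
      = (D0 v) ^ 2 + (D1 v) ^ 2 := by
    rw [EuclideanSpace.norm_eq, Real.sq_sqrt (by positivity), Fin.sum_univ_two]
    simp only [Real.norm_eq_abs, sq_abs, hw0, hw1]
  rw [hnw]
  have hD0v : D0 v = 2 / (1 + x 0) * v 1 - 2 * x 1 / (1 + x 0) ^ 2 * v 0 := by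
    simp only [hD0, ContinuousLinearMap.coe_sub', Pi.sub_apply, ContinuousLinearMap.coe_smul',
      Pi.smul_apply, PiLp.proj_apply, smul_eq_mul]
  have hD1v : D1 v = -(2 / ((1 + x 0) * r)) * (x 0 * v 0 + x 1 * v 1)
      - 2 * r / (1 + x 0) ^ 2 * v 0 := by
    simp only [hD1, ContinuousLinearMap.coe_sub', Pi.sub_apply, ContinuousLinearMap.coe_smul',
      Pi.smul_apply, PiLp.proj_apply, smul_eq_mul, innerSL_apply_apply, hinner]
  rw [hD0v, hD1v, hinner, ← hr2, hvn]
  exact key_gFH_identity (x 0) (x 1) (v 0) (v 1) r hr.ne' ha.ne' (by rw [hr2, hxn])
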